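/- In the MU-dec hardness reduction, if the SNF formula f' = x_f ∧ ⋀_{2≤i≤m} G(α_i) is satisfiable, then ω(f') is unsatisfiable: no linear structure M satisfies ω(f') at time 0. -/
import Mathlib


/- LTL in negation normal form (negation only on propositional variables), with
standard semantics over linear time structures `M : ℕ → Set P`. -/

inductive LTL (P : Type) : Type
  | tt : LTL P
  | ff : LTL P
  | var : P → LTL P
  | nvar : P → LTL P
  | and : LTL P → LTL P → LTL P
  | or : LTL P → LTL P → LTL P
  | next : LTL P → LTL P
  | unt : LTL P → LTL P → LTL P   -- strong until U
  | wunt : LTL P → LTL P → LTL P  -- weak until W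
  deriving DecidableEq

def Sat {P : Type} (M : ℕ → Set P) : LTL P → ℕ → Prop
  | .tt, _ => True
  | .ff, _ => False
  | .var p, i => p ∈ M i
  | .nvar p, i => p ∉ M i
  | .and a b, i => Sat M a i ∧ Sat M b i
  | .or a b, i => Sat M a i ∨ Sat M b i
  | .next a, i => Sat M a (i + 1)
  | .unt a b, i => ∃ j, i ≤ j ∧ Sat M b j ∧ ∀ k, i ≤ k → k < j → Sat M a k
  | .wunt a b, i =>
      (∀ j, i ≤ j → Sat M a j) ∨ (∃ j, i ≤ j ∧ Sat M b j ∧ ∀ k, i ≤ k → k < j → Sat M a k)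

def LTL.G {P : Type} (a : LTL P) : LTL P := .wunt a .ff
def LTL.F {P : Type} (a : LTL P) : LTL P := .unt .tt a

def bigAnd {P : Type} (l : List (LTL P)) : LTL P := l.foldr .and .tt
def bigOr {P : Type} (l : List (LTL P)) : LTL P := l.foldr .or .ff

/- Definitional SNF data: an SNF formula `f' = x_f ∧ ⋀_i G(α_i)` is given by the fresh
variable `x_f : P` and a list `cs` of SNF LTL-clauses, each clause being a disjunction
of operands: literals `l`, `X l`, or `F l`. -/

inductive Op (P : Type) : Type
  | lit : P → Bool → Op P   -- literal (variable, sign)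
  | nxt : P → Bool → Op P   -- X l
  | ev : P → Bool → Op P    -- F l
  deriving DecidableEq

def litF {P : Type} (p : P) (b : Bool) : LTL P := if b then .var p else .nvar p

def Op.toLTL {P : Type} : Op P → LTL P
  | .lit p b => litF p b
  | .nxt p b => .next (litF p b)
  | .ev p b => LTL.F (litF p b)

/-- The mirror "ϱ": ϱ l = ∼l, ϱ(X l) = X(∼l), ϱ(F l) = G(∼l). -/
def Op.mirror {P : Type} : Op P → LTL P
  | .lit p b => litF p (!b)
  | .nxt p b => .next (litF p (!b))
  | .ev p b => LTL.G (litF p (!b))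

def Op.varOf {P : Type} : Op P → P
  | .lit p _ => p
  | .nxt p _ => p
  | .ev p _ => p

def LTL.rename {P Q : Type} (r : P → Q) : LTL P → LTL Q
  | .tt => .tt
  | .ff => .ff
  | .var p => .var (r p)
  | .nvar p => .nvar (r p)
  | .and a b => .and (a.rename r) (b.rename r)
  | .or a b => .or (a.rename r) (b.rename r)
  | .next a => .next (a.rename r)
  | .unt a b => .unt (a.rename r) (b.rename r)
  | .wunt a b => .wunt (a.rename r) (b.rename r)

def clauseF {P : Type} (c : List (Op P)) : LTL P := bigOr (c.map Op.toLTL)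

variable {P : Type} [DecidableEq P]

/-- `f' = x_f ∧ ⋀_{2 ≤ i ≤ m} G(α_i)`. -/
def fprime (xf : P) (cs : List (List (Op P))) : LTL P :=
  .and (.var xf) (bigAnd (cs.map fun c => LTL.G (clauseF c)))

/- The reduction formula ω(f') uses fresh variables x₁,…,x_m (m = cs.length + 1,
index 0 corresponding to x₁ and α₁ = x_f); its variable type is `P ⊕ Fin m`. -/

def xvar (cs : List (List (Op P))) (i : Fin (cs.length + 1)) : LTL (P ⊕ Fin (cs.length + 1)) :=
  .var (Sum.inr i)

def nxvar (cs : List (List (Op P))) (i : Fin (cs.length + 1)) : LTL (P ⊕ Fin (cs.length + 1)) :=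
  .nvar (Sum.inr i)

/-- π_i = ⋁_{j ≠ i} x_j. -/
def piF (cs : List (List (Op P))) (i : Fin (cs.length + 1)) : LTL (P ⊕ Fin (cs.length + 1)) :=
  bigOr ((((List.finRange (cs.length + 1)).filter (fun j => j ≠ i))).map (xvar cs))

def alphaF (xf : P) (cs : List (List (Op P))) (i : Fin (cs.length + 1)) :
    LTL (P ⊕ Fin (cs.length + 1)) :=
  if i.val = 0 then .var (Sum.inl xf) else (clauseF (cs.getD (i.val - 1) [])).rename Sum.inl

def opsOf (cs : List (List (Op P))) (i : Fin (cs.length + 1)) : List (Op P) :=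
  if i.val = 0 then [] else cs.getD (i.val - 1) []

/-- The list of conjuncts of ω(f'). -/
def omegaList (xf : P) (cs : List (List (Op P))) : List (LTL (P ⊕ Fin (cs.length + 1))) :=
  [.or (.next (xvar cs 0)) (.or (alphaF xf cs 0) (piF cs 0))]
  ++ ((List.finRange (cs.length + 1)).filter (fun i => i ≠ 0)).map
       (fun i => LTL.G (.or (alphaF xf cs i) (piF cs i)))
  ++ [.or (nxvar cs 0) (.or (.nvar (Sum.inl xf)) (piF cs 0))]
  ++ ((List.finRange (cs.length + 1)).filter (fun i => i ≠ 0)).flatMap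
       (fun i => (opsOf cs i).map
         (fun op => LTL.G (.or (op.mirror.rename Sum.inl) (.or (piF cs i) (nxvar cs i)))))
  ++ ((List.finRange (cs.length + 1)).filter (fun j => j ≠ 0)).map
       (fun j => .or (nxvar cs 0) (nxvar cs j))
  ++ (List.finRange (cs.length + 1)).flatMap
       (fun i => (List.finRange (cs.length + 1)).filterMap
         (fun j => if 0 < i.val ∧ i.val < j.val
                   then some (LTL.G (.or (nxvar cs i) (nxvar cs j))) else none))
  ++ [.or (LTL.G (.next (nxvar cs 0))) (piF cs 0)]
  ++ [bigOr ((List.finRange (cs.length + 1)).map (xvar cs))]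

def omegaF (xf : P) (cs : List (List (Op P))) : LTL (P ⊕ Fin (cs.length + 1)) :=
  bigAnd (omegaList xf cs)

/-- Side conditions guaranteed by the definitional SNF transformation: no two operands
under the same `G` share a propositional variable, and the conjunction of the
`G(α_i)` (without `x_f`) has a model setting `x_f` to FALSE at time 0. -/
def SNFside (xf : P) (cs : List (List (Op P))) : Prop :=
  (∀ c ∈ cs, (c.map Op.varOf).Nodup) ∧
  ∃ M : ℕ → Set P, (∀ c ∈ cs, Sat M (LTL.G (clauseF c)) 0) ∧ xf ∉ M 0

/-- ω(f') is minimal unsatisfiable: unsatisfiable, but removing (weakening to TRUE)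
any single conjunct yields a satisfiable formula. -/
def MUomega (xf : P) (cs : List (List (Op P))) : Prop :=
  (¬ ∃ M, Sat M (omegaF xf cs) 0) ∧
  ∀ g ∈ omegaList xf cs, ∃ M, Sat M (bigAnd ((omegaList xf cs).erase g)) 0

section Aux

variable {Q : Type}

lemma Sat_bigAnd {M : ℕ → Set Q} {l : List (LTL Q)} {t : ℕ} :
    Sat M (bigAnd l) t ↔ ∀ a ∈ l, Sat M a t := by
  induction l with
  | nil => simp [bigAnd, Sat]
  | cons a l ih =>
    simp only [bigAnd, List.foldr_cons] at *
    simp [Sat, ih]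

lemma Sat_bigOr {M : ℕ → Set Q} {l : List (LTL Q)} {t : ℕ} :
    Sat M (bigOr l) t ↔ ∃ a ∈ l, Sat M a t := by
  induction l with
  | nil => simp [bigOr, Sat]
  | cons a l ih =>
    simp only [bigOr, List.foldr_cons] at *
    simp [Sat, ih]
lemma Sat_G {M : ℕ → Set Q} {a : LTL Q} {t : ℕ} :
    Sat M (LTL.G a) t ↔ ∀ j, t ≤ j → Sat M a j := by
  constructor
  · rintro (h | ⟨j, _, hff, _⟩)
    · exact h
    · exact absurd hff (by simp [Sat])
  · exact fun h => Or.inl h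

lemma bigOr_rename {R : Type} (r : Q → R) (l : List (LTL Q)) :
    (bigOr l).rename r = bigOr (l.map (LTL.rename r)) := by
  induction l with
  | nil => rfl
  | cons a l ih => simp [bigOr, LTL.rename] at *; exact ih

lemma Sat_clause_rename {R : Type} {M : ℕ → Set R} (r : Q → R) {c : List (Op Q)} {t : ℕ} :
    Sat M ((clauseF c).rename r) t ↔ ∃ op ∈ c, Sat M (op.toLTL.rename r) t := by
  rw [clauseF, bigOr_rename, Sat_bigOr]
  simp

lemma litF_rename {R : Type} (r : Q → R) (p : Q) (b : Bool) :
    (litF p b).rename r = litF (r p) b := by cases b <;> rfl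

lemma op_contra {R : Type} {M : ℕ → Set R} (r : Q → R) (op : Op Q) (t : ℕ)
    (h1 : Sat M (op.toLTL.rename r) t) (h2 : Sat M (op.mirror.rename r) t) : False := by
  cases op with
  | lit p b =>
    simp only [Op.toLTL, Op.mirror, litF_rename] at h1 h2
    cases b <;> simp [litF, Sat] at h1 h2 <;> first | exact h2 h1 | exact h1 h2
  | nxt p b =>
    simp only [Op.toLTL, Op.mirror, LTL.rename, litF_rename] at h1 h2
    cases b <;> simp [litF, Sat] at h1 h2 <;> first | exact h2 h1 | exact h1 h2
  | ev p b =>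
    simp only [Op.toLTL, Op.mirror, LTL.F, LTL.G, LTL.rename, litF_rename] at h1 h2
    obtain ⟨j, hj, hb, -⟩ := h1
    rcases h2 with h2 | ⟨_, _, hff, _⟩
    · have := h2 j hj
      cases b <;> simp [litF, Sat] at hb this <;> first | exact this hb | exact hb this
    · exact hff.elim

end Aux

lemma Sat_pi {cs : List (List (Op P))} {M : ℕ → Set (P ⊕ Fin (cs.length + 1))}
    {i : Fin (cs.length + 1)} {t : ℕ} :
    Sat M (piF cs i) t ↔ ∃ j, j ≠ i ∧ Sum.inr j ∈ M t := by
  rw [piF, Sat_bigOr]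
  simp [xvar, Sat, List.mem_filter]

lemma mem_sing {A : Type} {a : A} : a ∈ [a] := List.mem_singleton.mpr rfl

lemma mem_filt {n : ℕ} {i : Fin (n + 1)} (hi : i ≠ 0) :
    i ∈ (List.finRange (n + 1)).filter (fun j => j ≠ 0) :=
  List.mem_filter.mpr ⟨List.mem_finRange i, by simp [hi]⟩

section Mem

variable (xf : P) (cs : List (List (Op P)))

lemma mem_omega1 :
    (LTL.or (.next (xvar cs 0)) (.or (alphaF xf cs 0) (piF cs 0))) ∈ omegaList xf cs := by
  unfold omegaList
  exact List.mem_append_left _ (List.mem_append_left _ (List.mem_append_left _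
    (List.mem_append_left _ (List.mem_append_left _ (List.mem_append_left _
    (List.mem_append_left _ mem_sing))))))

lemma mem_omega2 {i : Fin (cs.length + 1)} (hi : i ≠ 0) :
    LTL.G (.or (alphaF xf cs i) (piF cs i)) ∈ omegaList xf cs := by
  unfold omegaList
  refine List.mem_append_left _ (List.mem_append_left _ (List.mem_append_left _
    (List.mem_append_left _ (List.mem_append_left _ (List.mem_append_left _
    (List.mem_append_right _ ?_))))))
  exact List.mem_map.mpr ⟨i, mem_filt hi, rfl⟩

lemma mem_omega3 :
    (LTL.or (nxvar cs 0) (.or (.nvar (Sum.inl xf)) (piF cs 0))) ∈ omegaList xf cs := by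
  unfold omegaList
  exact List.mem_append_left _ (List.mem_append_left _ (List.mem_append_left _
    (List.mem_append_left _ (List.mem_append_left _ (List.mem_append_right _ mem_sing)))))

lemma mem_omega4 {i : Fin (cs.length + 1)} (hi : i ≠ 0) {op : Op P} (hop : op ∈ opsOf cs i) :
    LTL.G (.or (op.mirror.rename Sum.inl) (.or (piF cs i) (nxvar cs i))) ∈ omegaList xf cs := by
  unfold omegaList
  refine List.mem_append_left _ (List.mem_append_left _ (List.mem_append_left _
    (List.mem_append_left _ (List.mem_append_right _ ?_))))
  exact List.mem_flatMap.mpr ⟨i, mem_filt hi, List.mem_map.mpr ⟨op, hop, rfl⟩⟩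

lemma mem_omega5 {j : Fin (cs.length + 1)} (hj : j ≠ 0) :
    (LTL.or (nxvar cs 0) (nxvar cs j)) ∈ omegaList xf cs := by
  unfold omegaList
  refine List.mem_append_left _ (List.mem_append_left _ (List.mem_append_left _
    (List.mem_append_right _ ?_)))
  exact List.mem_map.mpr ⟨j, mem_filt hj, rfl⟩

lemma mem_omega6 {i j : Fin (cs.length + 1)} (hi : 0 < i.val) (hij : i.val < j.val) :
    LTL.G (.or (nxvar cs i) (nxvar cs j)) ∈ omegaList xf cs := by
  unfold omegaList
  refine List.mem_append_left _ (List.mem_append_left _ (List.mem_append_right _ ?_))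
  refine List.mem_flatMap.mpr ⟨i, List.mem_finRange i, List.mem_filterMap.mpr
    ⟨j, List.mem_finRange j, ?_⟩⟩
  rw [if_pos ⟨hi, hij⟩]

lemma mem_omega7 :
    (LTL.or (LTL.G (.next (nxvar cs 0))) (piF cs 0)) ∈ omegaList xf cs := by
  unfold omegaList
  exact List.mem_append_left _ (List.mem_append_right _ mem_sing)

lemma mem_omega8 :
    bigOr ((List.finRange (cs.length + 1)).map (xvar cs)) ∈ omegaList xf cs := by
  unfold omegaList
  exact List.mem_append_right _ mem_sing

end Mem

/-- If f' is satisfiable then ω(f') is unsatisfiable: no linear structure satisfies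
ω(f') at time 0. -/
theorem stmt14 (xf : P) (cs : List (List (Op P))) (hsnf : SNFside xf cs)
    (hsat : ∃ M : ℕ → Set P, Sat M (fprime xf cs) 0) :
    ¬ ∃ M, Sat M (omegaF xf cs) 0 := by
  clear hsnf hsat
  rintro ⟨M, hM⟩
  have H : ∀ g ∈ omegaList xf cs, Sat M g 0 := Sat_bigAnd.mp hM
  have h8 := H _ (mem_omega8 xf cs)
  rw [Sat_bigOr] at h8
  obtain ⟨a, ha, hia⟩ := h8
  rw [List.mem_map] at ha
  obtain ⟨i, -, rfl⟩ := ha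
  have hi : Sum.inr i ∈ M 0 := hia
  by_cases h0 : i = 0
  · subst h0
    have h5 : ∀ j : Fin (cs.length + 1), j ≠ 0 → Sum.inr j ∉ M 0 := by
      intro j hj
      rcases H _ (mem_omega5 xf cs hj) with h | h
      · exact absurd hi h
      · exact h
    have hpi0 : ¬ Sat M (piF cs 0) 0 := by
      rw [Sat_pi]; rintro ⟨j, hj, hmem⟩; exact h5 j hj hmem
    have hxf : Sum.inl xf ∉ M 0 := by
      rcases H _ (mem_omega3 xf cs) with h | h | h
      · exact absurd hi h
      · exact h
      · exact absurd h hpi0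
    have hx1 : Sum.inr (0 : Fin (cs.length + 1)) ∈ M 1 := by
      rcases H _ (mem_omega1 xf cs) with h | h | h
      · exact h
      · simp only [alphaF, if_pos rfl] at h; exact absurd h hxf
      · exact absurd h hpi0
    rcases H _ (mem_omega7 xf cs) with h | h
    · exact (Sat_G.mp h 0 (le_refl 0)) hx1
    · exact hpi0 h
  · have hx0 : Sum.inr (0 : Fin (cs.length + 1)) ∉ M 0 := by
      rcases H _ (mem_omega5 xf cs h0) with h | h
      · exact h
      · exact absurd hi h
    have hex : ∀ j : Fin (cs.length + 1), j ≠ 0 → j ≠ i → Sum.inr j ∉ M 0 := by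
      intro j hj hji
      have hiv : 0 < i.val := Nat.pos_of_ne_zero (fun h => h0 (Fin.ext h))
      have hjv : 0 < j.val := Nat.pos_of_ne_zero (fun h => hj (Fin.ext h))
      have hne : i.val ≠ j.val := fun h => hji (Fin.ext h.symm)
      rcases lt_or_gt_of_ne hne with hlt | hlt
      · rcases Sat_G.mp (H _ (mem_omega6 xf cs hiv hlt)) 0 (le_refl 0) with h | h
        · exact absurd hi h
        · exact h
      · rcases Sat_G.mp (H _ (mem_omega6 xf cs hjv hlt)) 0 (le_refl 0) with h | h
        · exact h
        · exact absurd hi h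
    have hpii : ¬ Sat M (piF cs i) 0 := by
      rw [Sat_pi]; rintro ⟨j, hj, hmem⟩
      by_cases hj0 : j = 0
      · exact hx0 (hj0 ▸ hmem)
      · exact hex j hj0 hj hmem
    have hai : Sat M (alphaF xf cs i) 0 := by
      rcases Sat_G.mp (H _ (mem_omega2 xf cs h0)) 0 (le_refl 0) with h | h
      · exact h
      · exact absurd h hpii
    have hiv : i.val ≠ 0 := fun h => h0 (Fin.ext h)
    rw [alphaF, if_neg hiv, Sat_clause_rename] at hai
    obtain ⟨op, hop, hsatop⟩ := hai
    have hop' : op ∈ opsOf cs i := by rw [opsOf, if_neg hiv]; exact hop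
    rcases Sat_G.mp (H _ (mem_omega4 xf cs h0 hop')) 0 (le_refl 0) with h | h | h
    · exact op_contra Sum.inl op 0 hsatop h
    · exact hpii h
    · exact h hi
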